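/- Let O = U · D · U⁻¹ be an n×n complex matrix, where U is invertible and D is diagonal with real diagonal entries. Then an n×n Hermitian positive-definite matrix η satisfies η · O = Oᴴ · η if and only if η⁻¹ = U · d · Uᴴ for some Hermitian positive-definite matrix d commuting with D (d · D = D · d). In other words, the metrics compatible with O are exactly the inverses of matrices of the form U d Uᴴ with d Hermitian positive definite and commuting with D. -/

import Mathlib

open scoped ComplexOrder Matrix

lemma posDef_conj_aux {n : ℕ} {M B : Matrix (Fin n) (Fin n) ℂ} (hM : M.PosDef)
    (hB : IsUnit B) : (B * M * Bᴴ).PosDef := by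
  refine Matrix.PosDef.of_dotProduct_mulVec_pos ?_ (fun x hx => ?_)
  · show (B * M * Bᴴ)ᴴ = B * M * Bᴴ
    simp [Matrix.conjTranspose_mul, hM.isHermitian.eq, Matrix.mul_assoc]
  · have hy : Bᴴ *ᵥ x ≠ 0 := by
      have : Function.Injective (Bᴴ.mulVec) :=
        Matrix.mulVec_injective_iff_isUnit.mpr ((Matrix.isUnit_conjTranspose Bᴴ).mp (by simpa using hB))
      intro h
      exact hx (this (by simpa using h))
    have key : star x ⬝ᵥ ((B * M * Bᴴ) *ᵥ x)
        = star (Bᴴ *ᵥ x) ⬝ᵥ (M *ᵥ (Bᴴ *ᵥ x)) := by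
      rw [← Matrix.mulVec_mulVec, ← Matrix.mulVec_mulVec, Matrix.dotProduct_mulVec (star x),
        Matrix.star_mulVec, Matrix.conjTranspose_conjTranspose]
    rw [key]
    exact hM.dotProduct_mulVec_pos hy

/-- Let `O = U * D * U⁻¹` with `U` invertible and `D = diagonal dD` a diagonal
matrix with real entries. Then a Hermitian positive-definite matrix `η` satisfies
`η * O = Oᴴ * η` if and only if `η⁻¹ = U * d * Uᴴ` for some Hermitian positive-definite `d`
commuting with `D`. -/
theorem stmt_3 (n : ℕ) (O U : Matrix (Fin n) (Fin n) ℂ) (dD : Fin n → ℝ)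
    (hU : IsUnit U)
    (hO : O = U * Matrix.diagonal (fun i => (dD i : ℂ)) * U⁻¹)
    (η : Matrix (Fin n) (Fin n) ℂ) (hη : η.PosDef) :
    η * O = Oᴴ * η ↔
      ∃ d : Matrix (Fin n) (Fin n) ℂ, d.PosDef ∧
        d * Matrix.diagonal (fun i => (dD i : ℂ))
          = Matrix.diagonal (fun i => (dD i : ℂ)) * d ∧
        η⁻¹ = U * d * Uᴴ := by
  set D : Matrix (Fin n) (Fin n) ℂ := Matrix.diagonal (fun i => (dD i : ℂ)) with hD
  have hUdet : IsUnit U.det := (Matrix.isUnit_iff_isUnit_det U).mp hU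
  have hUU : U * U⁻¹ = 1 := Matrix.mul_nonsing_inv U hUdet
  have hUU' : U⁻¹ * U = 1 := Matrix.nonsing_inv_mul U hUdet
  have hDH : Dᴴ = D := by
    simp [hD, Matrix.diagonal_conjTranspose]
  have hOH : Oᴴ = (U⁻¹)ᴴ * D * Uᴴ := by
    rw [hO]
    simp [Matrix.conjTranspose_mul, hDH, Matrix.mul_assoc]
  have hUHinv : (Uᴴ)⁻¹ = (U⁻¹)ᴴ := (Matrix.conjTranspose_nonsing_inv U).symm
  have hUHU : Uᴴ * (U⁻¹)ᴴ = 1 := by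
    rw [← Matrix.conjTranspose_mul, hUU']; simp
  have hUHU' : (U⁻¹)ᴴ * Uᴴ = 1 := by
    rw [← Matrix.conjTranspose_mul, hUU]; simp
  have hηinv : η * η⁻¹ = 1 := Matrix.mul_nonsing_inv η (hη.isUnit.map (Matrix.detMonoidHom))
  have hηinv' : η⁻¹ * η = 1 := Matrix.nonsing_inv_mul η (hη.isUnit.map (Matrix.detMonoidHom))
  constructor
  · intro h
    refine ⟨U⁻¹ * η⁻¹ * (U⁻¹)ᴴ, ?_, ?_, ?_⟩
    · exact posDef_conj_aux hη.inv ((Matrix.isUnit_nonsing_inv_iff).mpr hU)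
    · -- from η O = Oᴴ η derive O η⁻¹ = η⁻¹ Oᴴ, i.e. commuting
      have h2 : O * η⁻¹ = η⁻¹ * Oᴴ := by
        have h' : η⁻¹ * (η * O) * η⁻¹ = η⁻¹ * (Oᴴ * η) * η⁻¹ := by rw [h]
        rwa [← Matrix.mul_assoc η⁻¹ η O, hηinv', Matrix.one_mul,
          Matrix.mul_assoc η⁻¹ (Oᴴ * η) η⁻¹, Matrix.mul_assoc Oᴴ η η⁻¹, hηinv,
          Matrix.mul_one] at h'
      have h3 : U * D * U⁻¹ * η⁻¹ = η⁻¹ * ((U⁻¹)ᴴ * D * Uᴴ) := by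
        rw [← hO, ← hOH]; exact h2
      -- multiply on left by U⁻¹ and on right by (U⁻¹)ᴴ... rather direct computation
      have e1 : U⁻¹ * (U * D * U⁻¹ * η⁻¹) * (Uᴴ)⁻¹
          = D * (U⁻¹ * η⁻¹ * (U⁻¹)ᴴ) := by
        rw [hUHinv]
        simp only [Matrix.mul_assoc, ← Matrix.mul_assoc U⁻¹ U, hUU', Matrix.one_mul]
      have e2 : U⁻¹ * (η⁻¹ * ((U⁻¹)ᴴ * D * Uᴴ)) * (Uᴴ)⁻¹
          = (U⁻¹ * η⁻¹ * (U⁻¹)ᴴ) * D := by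
        rw [hUHinv]
        simp only [Matrix.mul_assoc]
        rw [hUHU, Matrix.mul_one]
      rw [← e1, ← e2, h3]
    · rw [Matrix.mul_assoc, Matrix.mul_assoc, hUHU', Matrix.mul_one, ← Matrix.mul_assoc, hUU,
        Matrix.one_mul]
  · rintro ⟨d, hd, hcomm, hinv⟩
    have h2 : O * η⁻¹ = η⁻¹ * Oᴴ := by
      rw [hOH, hO, hinv]
      calc U * D * U⁻¹ * (U * d * Uᴴ)
          = U * (D * d) * Uᴴ := by
            simp only [Matrix.mul_assoc, ← Matrix.mul_assoc U⁻¹ U, hUU', Matrix.one_mul]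
        _ = U * (d * D) * Uᴴ := by rw [hcomm]
        _ = U * d * Uᴴ * ((U⁻¹)ᴴ * D * Uᴴ) := by
            simp only [Matrix.mul_assoc]
            rw [← Matrix.mul_assoc Uᴴ, hUHU, Matrix.one_mul]
    calc η * O = η * (O * η⁻¹) * η := by
          rw [Matrix.mul_assoc, Matrix.mul_assoc, hηinv', Matrix.mul_one]
      _ = η * (η⁻¹ * Oᴴ) * η := by rw [h2]
      _ = Oᴴ * η := by rw [← Matrix.mul_assoc, hηinv, Matrix.one_mul]
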